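/- For any k ≥ 2, n = k+1, s = k−1, α ∈ ℝ, and z ∈ ℝ^n, the Newton-type inequality S_{k;s}(z)² ≥ S_{k-1;s}(z)S_{k+1;s}(z) holds, where S_{m;s}(z) = ∑_{i=0}^s C(s,i)α^i E_{m-i}(z). Moreover k·n²·(S_{k;s}(z)² − S_{k-1;s}(z)S_{k+1;s}(z)) = ∑_{1≤i<j≤n}(z_i − z_j)² ∏_{l≠i,j}(z_l + α)². -/

import Mathlib

/-- The k-th elementary symmetric polynomial of `x : Fin n → ℝ`, with the
conventions `σ_0 = 1` and `σ_k = 0` for `k < 0` or `k > n`. -/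
noncomputable def esymm (n : ℕ) (x : Fin n → ℝ) (k : ℤ) : ℝ :=
  if 0 ≤ k then ∑ s ∈ (Finset.univ : Finset (Fin n)).powersetCard k.toNat, ∏ i ∈ s, x i else 0

/-- The normalized elementary symmetric mean `E_k(x) = σ_k(x) / C(n,k)`. -/
noncomputable def Esymm (n : ℕ) (x : Fin n → ℝ) (k : ℤ) : ℝ :=
  esymm n x k / (n.choose k.toNat)


/-- `S_{m;s}(x) = ∑_{i=0}^{s} C(s,i) α^i E_{m-i}(x)`. -/
noncomputable def Ss (n : ℕ) (α : ℝ) (x : Fin n → ℝ) (s : ℕ) (m : ℤ) : ℝ :=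
  ∑ i ∈ Finset.range (s + 1), (s.choose i : ℝ) * α ^ i * Esymm n x (m - i)



noncomputable def sig (k : ℕ) (z : Fin (k+1) → ℝ) (j : ℕ) : ℝ :=
  ∑ t ∈ (Finset.univ : Finset (Fin (k+1))).powersetCard j, ∏ l ∈ t, z l

noncomputable def SA (k : ℕ) (α : ℝ) (z : Fin (k+1) → ℝ) : ℝ :=
  ∑ j ∈ Finset.range (k+1), ((k+1-j : ℕ) : ℝ) * sig k z j * α ^ (k - j)

noncomputable def SB (k : ℕ) (α : ℝ) (z : Fin (k+1) → ℝ) : ℝ :=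
  ∑ j ∈ Finset.range k, (((k+1-j) * (k-j) : ℕ) : ℝ) * sig k z j * α ^ (k-1-j)

noncomputable def SF (k : ℕ) (α : ℝ) (z : Fin (k+1) → ℝ) : ℝ :=
  ∑ j ∈ Finset.range (k+2), sig k z j * α ^ (k+1-j)

open Finset

lemma count_lemma {β : Type*} [DecidableEq β] (s : Finset β) (h : Finset β → ℝ) :
    ∑ j ∈ s, ∑ t ∈ (s.erase j).powerset, h t
      = ∑ t ∈ s.powerset, ((s.card - t.card : ℕ) : ℝ) * h t := by
  have h1 : ∀ j ∈ s, ∑ t ∈ (s.erase j).powerset, h t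
      = ∑ t ∈ s.powerset, if j ∉ t then h t else 0 := by
    intro j hj
    rw [← Finset.sum_filter]
    congr 1
    ext t
    simp [Finset.mem_powerset, Finset.subset_erase, and_comm]
  rw [Finset.sum_congr rfl h1, Finset.sum_comm]
  refine Finset.sum_congr rfl fun t ht => ?_
  rw [← Finset.sum_filter, Finset.sum_const, nsmul_eq_mul,
      ← Finset.sdiff_eq_filter, Finset.card_sdiff_of_subset (Finset.mem_powerset.mp ht)]

lemma prod_expand {β : Type*} [DecidableEq β] (α : ℝ) (z : β → ℝ) (s : Finset β) :
    ∏ l ∈ s, (z l + α) = ∑ t ∈ s.powerset, (∏ l ∈ t, z l) * α ^ (s.card - t.card) := by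
  rw [Finset.prod_add]
  refine Finset.sum_congr rfl fun t ht => ?_
  rw [Finset.prod_const, Finset.card_sdiff_of_subset (Finset.mem_powerset.mp ht)]

lemma group_by_card (k : ℕ) (z : Fin (k+1) → ℝ) (c : ℕ → ℝ) :
    ∑ t ∈ (Finset.univ : Finset (Fin (k+1))).powerset, c t.card * ∏ l ∈ t, z l
      = ∑ j ∈ Finset.range (k+2), c j * sig k z j := by
  rw [Finset.sum_powerset]
  have hcard : #(Finset.univ : Finset (Fin (k+1))) = k+1 := by simp
  rw [hcard]
  refine Finset.sum_congr rfl fun j hj => ?_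
  rw [sig, Finset.mul_sum]
  refine Finset.sum_congr rfl fun t ht => ?_
  rw [(Finset.mem_powersetCard.mp ht).2]
lemma LF (k : ℕ) (α : ℝ) (z : Fin (k+1) → ℝ) :
    ∏ l : Fin (k+1), (z l + α) = SF k α z := by
  rw [prod_expand]
  have e2 : ∀ t ∈ (Finset.univ : Finset (Fin (k+1))).powerset,
      (∏ l ∈ t, z l) * α ^ (#(Finset.univ : Finset (Fin (k+1))) - #t)
        = (fun j => α ^ (k+1-j)) #t * ∏ l ∈ t, z l := by
    intro t ht
    have : #(Finset.univ : Finset (Fin (k+1))) = k+1 := by simp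
    rw [this]; ring
  rw [Finset.sum_congr rfl e2, group_by_card k z (fun j => α ^ (k+1-j))]
  exact Finset.sum_congr rfl fun j hj => by ring

lemma LA (k : ℕ) (α : ℝ) (z : Fin (k+1) → ℝ) :
    ∑ i : Fin (k+1), ∏ l ∈ Finset.univ.erase i, (z l + α) = SA k α z := by
  have e1 : ∀ i ∈ (Finset.univ : Finset (Fin (k+1))), ∏ l ∈ Finset.univ.erase i, (z l + α)
      = ∑ t ∈ (Finset.univ.erase i).powerset, (∏ l ∈ t, z l) * α ^ (k - #t) := by
    intro i _
    rw [prod_expand]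
    refine Finset.sum_congr rfl fun t ht => ?_
    have : #((Finset.univ : Finset (Fin (k+1))).erase i) = k := by
      rw [Finset.card_erase_of_mem (Finset.mem_univ i)]; simp
    rw [this]
  rw [Finset.sum_congr rfl e1, count_lemma]
  have e2 : ∀ t ∈ (Finset.univ : Finset (Fin (k+1))).powerset,
      ((#(Finset.univ : Finset (Fin (k+1))) - #t : ℕ) : ℝ) * ((∏ l ∈ t, z l) * α ^ (k - #t))
        = (fun j => ((k+1-j : ℕ) : ℝ) * α ^ (k-j)) #t * ∏ l ∈ t, z l := by
    intro t ht
    have : #(Finset.univ : Finset (Fin (k+1))) = k+1 := by simp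
    rw [this]; ring
  rw [Finset.sum_congr rfl e2, group_by_card k z (fun j => ((k+1-j : ℕ) : ℝ) * α ^ (k-j)), Finset.sum_range_succ]
  have : ((k+1-(k+1) : ℕ) : ℝ) = 0 := by norm_num
  rw [this, SA]
  simp only [zero_mul, add_zero]
  exact Finset.sum_congr rfl fun j hj => by ring

lemma LB (k : ℕ) (α : ℝ) (z : Fin (k+1) → ℝ) :
    ∑ i : Fin (k+1), ∑ j ∈ Finset.univ.erase i,
        ∏ l ∈ (Finset.univ.erase i).erase j, (z l + α) = SB k α z := by
  have e1 : ∀ i ∈ (Finset.univ : Finset (Fin (k+1))),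
      ∑ j ∈ Finset.univ.erase i, ∏ l ∈ (Finset.univ.erase i).erase j, (z l + α)
      = ∑ t ∈ (Finset.univ.erase i).powerset,
          ((k - #t : ℕ) : ℝ) * ((∏ l ∈ t, z l) * α ^ (k-1 - #t)) := by
    intro i _
    have card_i : #((Finset.univ : Finset (Fin (k+1))).erase i) = k := by
      rw [Finset.card_erase_of_mem (Finset.mem_univ i)]; simp
    have step : ∀ j ∈ Finset.univ.erase i,
        ∏ l ∈ (Finset.univ.erase i).erase j, (z l + α)
          = ∑ t ∈ ((Finset.univ.erase i).erase j).powerset,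
              (∏ l ∈ t, z l) * α ^ (k-1 - #t) := by
      intro j hj
      rw [prod_expand]
      refine Finset.sum_congr rfl fun t ht => ?_
      rw [Finset.card_erase_of_mem hj, card_i]
    rw [Finset.sum_congr rfl step, count_lemma, card_i]
  rw [Finset.sum_congr rfl e1, count_lemma]
  have e2 : ∀ t ∈ (Finset.univ : Finset (Fin (k+1))).powerset,
      ((#(Finset.univ : Finset (Fin (k+1))) - #t : ℕ) : ℝ) *
          (((k - #t : ℕ) : ℝ) * ((∏ l ∈ t, z l) * α ^ (k-1 - #t)))
        = (fun j => ((k+1-j : ℕ) : ℝ) * ((k-j : ℕ) : ℝ) * α ^ (k-1-j)) #t * ∏ l ∈ t, z l := by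
    intro t ht
    have : #(Finset.univ : Finset (Fin (k+1))) = k+1 := by simp
    rw [this]; ring
  rw [Finset.sum_congr rfl e2, group_by_card k z (fun j => ((k+1-j : ℕ) : ℝ) * ((k-j : ℕ) : ℝ) * α ^ (k-1-j)), Finset.sum_range_succ, Finset.sum_range_succ]
  have z1 : ((k+1-(k+1) : ℕ) : ℝ) = 0 := by norm_num
  have z2 : ((k-k : ℕ) : ℝ) = 0 := by norm_num
  rw [z1, z2, SB]
  simp only [zero_mul, mul_zero, add_zero]
  refine Finset.sum_congr rfl fun j hj => ?_
  push_cast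
  ring
lemma nid_base (k i : ℕ) (hk : 1 ≤ k) :
    k*(k+1)*Nat.choose (k-1) i = (i+1)*((i+2)*Nat.choose (k+1) (i+2)) := by
  have h1 : k * Nat.choose (k-1) i = Nat.choose k (i+1) * (i+1) := by
    have := Nat.add_one_mul_choose_eq (k-1) i
    rwa [Nat.sub_add_cancel hk] at this
  have h2 : (k+1) * Nat.choose k (i+1) = Nat.choose (k+1) (i+2) * (i+2) :=
    Nat.add_one_mul_choose_eq k (i+1)
  calc k*(k+1)*Nat.choose (k-1) i = (k+1)*(k*Nat.choose (k-1) i) := by ring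
    _ = (k+1)*(Nat.choose k (i+1)*(i+1)) := by rw [h1]
    _ = (i+1)*((k+1)*Nat.choose k (i+1)) := by ring
    _ = (i+1)*(Nat.choose (k+1) (i+2)*(i+2)) := by rw [h2]
    _ = (i+1)*((i+2)*Nat.choose (k+1) (i+2)) := by ring

lemma nid2' (k i : ℕ) (hk : 1 ≤ k) (hi : i < k) :
    k*(k+1)*Nat.choose (k-1) i = (i+1)*((k-i)*Nat.choose (k+1) (i+1)) := by
  have h3 := Nat.choose_succ_right_eq (k+1) (i+1)
  have e : k+1-(i+1) = k-i := by omega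
  rw [e] at h3
  calc k*(k+1)*Nat.choose (k-1) i = (i+1)*(Nat.choose (k+1) (i+2)*(i+2)) := by
        rw [nid_base k i hk]; ring
    _ = (i+1)*(Nat.choose (k+1) (i+1)*(k-i)) := by rw [h3]
    _ = (i+1)*((k-i)*Nat.choose (k+1) (i+1)) := by ring

lemma nid3' (k i : ℕ) (hk : 1 ≤ k) (hi : i < k) :
    k*(k+1)*Nat.choose (k-1) i = (k-i)*((k+1-i)*Nat.choose (k+1) i) := by
  have h4 := Nat.choose_succ_right_eq (k+1) i
  calc k*(k+1)*Nat.choose (k-1) i = (k-i)*(Nat.choose (k+1) (i+1)*(i+1)) := by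
        rw [nid2' k i hk hi]; ring
    _ = (k-i)*(Nat.choose (k+1) i*(k+1-i)) := by rw [h4]
    _ = (k-i)*((k+1-i)*Nat.choose (k+1) i) := by ring

lemma nid1 (k i : ℕ) (hk : 1 ≤ k) (hi : i < k) :
    k*(k+1)*Nat.choose (k-1) i = (i+1)*((i+2)*Nat.choose (k+1) (k-1-i)) := by
  have h : k-1-i = (k+1) - (i+2) := by omega
  rw [h, Nat.choose_symm (by omega)]
  exact nid_base k i hk

lemma nid2 (k i : ℕ) (hk : 1 ≤ k) (hi : i < k) :
    k*(k+1)*Nat.choose (k-1) i = (i+1)*((k-i)*Nat.choose (k+1) (k-i)) := by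
  have h : k-i = (k+1) - (i+1) := by omega
  rw [show Nat.choose (k+1) (k-i) = Nat.choose (k+1) (i+1) by
    rw [h, Nat.choose_symm (by omega)]]
  exact nid2' k i hk hi

lemma nid3 (k i : ℕ) (hk : 1 ≤ k) (hi : i < k) :
    k*(k+1)*Nat.choose (k-1) i = (k-i)*((k+1-i)*Nat.choose (k+1) (k+1-i)) := by
  rw [show Nat.choose (k+1) (k+1-i) = Nat.choose (k+1) i from
    Nat.choose_symm (by omega)]
  exact nid3' k i hk hi

lemma Esymm_eq (k : ℕ) (z : Fin (k+1) → ℝ) (m : ℤ) (j : ℕ) (hm : m = (j : ℤ)) :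
    Esymm (k+1) z m = sig k z j / ((k+1).choose j : ℕ) := by
  subst hm
  rw [Esymm, esymm, if_pos (Int.natCast_nonneg j), Int.toNat_natCast]
  rfl
lemma comb1 (k : ℕ) (hk : 2 ≤ k) (α : ℝ) (z : Fin (k+1) → ℝ) :
    (k : ℝ) * ((k:ℝ)+1) * Ss (k+1) α z (k-1) ((k:ℤ)-1) = SB k α z := by
  have hs : k - 1 + 1 = k := by omega
  rw [Ss, hs, Finset.mul_sum, SB,
    ← Finset.sum_range_reflect
      (fun j => (((k+1-j) * (k-j) : ℕ) : ℝ) * sig k z j * α ^ (k-1-j)) k]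
  refine Finset.sum_congr rfl fun i hi => ?_
  have hi' : i < k := Finset.mem_range.mp hi
  have e1 : k+1-(k-1-i) = i+2 := by omega
  have e2 : k-(k-1-i) = i+1 := by omega
  have e3 : k-1-(k-1-i) = i := by omega
  rw [e1, e2, e3]
  have hm : ((k:ℤ)-1-(i:ℤ)) = ((k-1-i : ℕ) : ℤ) := by omega
  rw [Esymm_eq k z _ (k-1-i) hm]
  have hpos : 0 < (k+1).choose (k-1-i) := Nat.choose_pos (by omega)
  have hC : (((k+1).choose (k-1-i) : ℕ) : ℝ) ≠ 0 := by
    exact_mod_cast hpos.ne'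
  have hnat := nid1 k i (by omega) hi'
  have hr : (k:ℝ)*((k:ℝ)+1)*((k-1).choose i : ℕ) =
      ((i:ℝ)+1)*(((i:ℝ)+2)*((k+1).choose (k-1-i) : ℕ)) := by
    exact_mod_cast hnat
  field_simp
  push_cast at hr ⊢
  linear_combination (sig k z (k-1-i) * α^i) * hr
lemma comb2 (k : ℕ) (hk : 2 ≤ k) (α : ℝ) (z : Fin (k+1) → ℝ) :
    (k : ℝ) * ((k:ℝ)+1) * Ss (k+1) α z (k-1) (k:ℤ)
      = (k:ℝ) * SA k α z - α * SB k α z := by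
  have hs : k - 1 + 1 = k := by omega
  have hC : (k:ℝ) * SA k α z - α * SB k α z
      = ∑ j ∈ Finset.range (k+1), ((j*(k+1-j) : ℕ) : ℝ) * sig k z j * α ^ (k-j) := by
    have hSB : α * SB k α z
        = ∑ j ∈ Finset.range (k+1), (((k+1-j)*(k-j) : ℕ) : ℝ) * sig k z j * α ^ (k-j) := by
      rw [Finset.sum_range_succ]
      have h0 : (((k+1-k)*(k-k) : ℕ) : ℝ) = 0 := by norm_num
      rw [h0, zero_mul, zero_mul, add_zero, SB, Finset.mul_sum]
      refine Finset.sum_congr rfl fun j hj => ?_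
      have hj' : j < k := Finset.mem_range.mp hj
      rw [show k-j = (k-1-j)+1 by omega, pow_succ]
      ring
    rw [hSB, SA, Finset.mul_sum, ← Finset.sum_sub_distrib]
    refine Finset.sum_congr rfl fun j hj => ?_
    have hjk : j ≤ k := by
      have := Finset.mem_range.mp hj; omega
    rw [Nat.cast_mul, Nat.cast_mul, Nat.cast_sub (show j ≤ k+1 by omega), Nat.cast_sub hjk]
    push_cast
    ring
  rw [Ss, hs, Finset.mul_sum, hC,
    ← Finset.sum_range_reflect
      (fun j => ((j*(k+1-j) : ℕ) : ℝ) * sig k z j * α ^ (k-j)) (k+1),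
    Finset.sum_range_succ]
  rw [show k+1-1-k = 0 by omega]
  norm_num
  refine Finset.sum_congr rfl fun i hi => ?_
  have hi' : i < k := Finset.mem_range.mp hi
  rw [show k+1-(k-i) = i+1 by omega, show k-(k-i) = i by omega]
  have hm : ((k:ℤ)-(i:ℤ)) = ((k-i : ℕ) : ℤ) := by omega
  rw [Esymm_eq k z _ (k-i) hm]
  have hpos : 0 < (k+1).choose (k-i) := Nat.choose_pos (by omega)
  have hCne : (((k+1).choose (k-i) : ℕ) : ℝ) ≠ 0 := by exact_mod_cast hpos.ne'
  have hr : (k:ℝ)*((k:ℝ)+1)*((k-1).choose i : ℕ) =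
      ((i:ℝ)+1)*((((k-i : ℕ)) : ℝ)*((k+1).choose (k-i) : ℕ)) := by
    exact_mod_cast nid2 k i (by omega) hi'
  field_simp
  push_cast at hr ⊢
  linear_combination (sig k z (k-i) * α^i) * hr
lemma coeff3 (k j : ℕ) (h : j ≤ k+1) :
    (k+1-j)*(k-j) + k*(k+1) = j*(j-1) + 2*(k*(k+1-j)) := by
  rcases j with _ | j'
  · simp; ring
  · rcases Nat.eq_or_lt_of_le h with h1 | h1
    · rw [h1]
      simp [Nat.sub_self]
      ring
    · have hj : j' + 1 ≤ k := by omega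
      obtain ⟨a, rfl⟩ : ∃ a, k = (j'+1) + a := ⟨k - (j'+1), by omega⟩
      have e1 : j'+1+a+1-(j'+1) = a+1 := by omega
      have e2 : j'+1+a-(j'+1) = a := by omega
      have e3 : j'+1-1 = j' := by omega
      rw [e1, e2, e3]
      ring

lemma comb3 (k : ℕ) (hk : 2 ≤ k) (α : ℝ) (z : Fin (k+1) → ℝ) :
    (k : ℝ) * ((k:ℝ)+1) * Ss (k+1) α z (k-1) ((k:ℤ)+1)
      = α^2 * SB k α z - 2*(k:ℝ)*α*SA k α z + (k:ℝ)*((k:ℝ)+1)*SF k α z := by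
  have hs : k - 1 + 1 = k := by omega
  have hSB2 : α^2 * SB k α z
      = ∑ j ∈ Finset.range (k+2), (((k+1-j)*(k-j) : ℕ) : ℝ) * sig k z j * α^(k+1-j) := by
    rw [Finset.sum_range_succ, Finset.sum_range_succ,
      show (k+1-(k+1))*(k-(k+1)) = 0 by simp, show (k+1-k)*(k-k) = 0 by simp]
    norm_num
    rw [SB, Finset.mul_sum]
    refine Finset.sum_congr rfl fun j hj => ?_
    have hj' : j < k := Finset.mem_range.mp hj
    have hp : α^(k+1-j) = α^(k-1-j) * α^2 := by
      rw [← pow_add]; congr 1; omega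
    rw [hp]; push_cast; ring
  have hSA2 : 2*(k:ℝ)*α*SA k α z
      = ∑ j ∈ Finset.range (k+2), 2*(k:ℝ)*((k+1-j : ℕ) : ℝ) * sig k z j * α^(k+1-j) := by
    rw [Finset.sum_range_succ, show k+1-(k+1) = 0 by omega]
    norm_num
    rw [SA, Finset.mul_sum]
    refine Finset.sum_congr rfl fun j hj => ?_
    have hj' : j < k+1 := Finset.mem_range.mp hj
    have hp : α^(k+1-j) = α^(k-j) * α := by
      rw [← pow_succ]; congr 1; omega
    rw [hp]; ring
  have hSF2 : (k:ℝ)*((k:ℝ)+1)*SF k α z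
      = ∑ j ∈ Finset.range (k+2), (k:ℝ)*((k:ℝ)+1) * sig k z j * α^(k+1-j) := by
    rw [SF, Finset.mul_sum]
    exact Finset.sum_congr rfl fun j _ => by ring
  have hC : α^2 * SB k α z - 2*(k:ℝ)*α*SA k α z + (k:ℝ)*((k:ℝ)+1)*SF k α z
      = ∑ j ∈ Finset.range (k+2), ((j*(j-1) : ℕ) : ℝ) * sig k z j * α^(k+1-j) := by
    rw [hSB2, hSA2, hSF2, ← Finset.sum_sub_distrib, ← Finset.sum_add_distrib]
    refine Finset.sum_congr rfl fun j hj => ?_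
    have hj' : j ≤ k+1 := by
      have := Finset.mem_range.mp hj; omega
    have hcr : ((((k+1-j)*(k-j) : ℕ)) : ℝ) + (k:ℝ)*((k:ℝ)+1)
        = ((j*(j-1) : ℕ) : ℝ) + 2*((k:ℝ)*((k+1-j : ℕ) : ℝ)) := by
      exact_mod_cast coeff3 k j hj'
    linear_combination (sig k z j * α^(k+1-j)) * hcr
  rw [hC, Ss, hs, Finset.mul_sum,
    ← Finset.sum_range_reflect
      (fun j => ((j*(j-1) : ℕ) : ℝ) * sig k z j * α^(k+1-j)) (k+2),
    Finset.sum_range_succ, Finset.sum_range_succ]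
  norm_num
  refine Finset.sum_congr rfl fun i hi => ?_
  have hi' : i < k := Finset.mem_range.mp hi
  rw [show k+1-i-1 = k-i by omega, show k+1-(k+1-i) = i by omega]
  have hm : ((k:ℤ)+1-(i:ℤ)) = ((k+1-i : ℕ) : ℤ) := by omega
  rw [Esymm_eq k z _ (k+1-i) hm]
  have hpos : 0 < (k+1).choose (k+1-i) := Nat.choose_pos (by omega)
  have hCne : (((k+1).choose (k+1-i) : ℕ) : ℝ) ≠ 0 := by exact_mod_cast hpos.ne'
  have hr : (k:ℝ)*((k:ℝ)+1)*((k-1).choose i : ℕ) =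
      (((k-i : ℕ)) : ℝ)*((((k+1-i : ℕ)) : ℝ)*((k+1).choose (k+1-i) : ℕ)) := by
    exact_mod_cast nid3 k i (by omega) hi'
  field_simp
  push_cast at hr ⊢
  linear_combination (sig k z (k+1-i) * α^i) * hr
lemma swap_lt (n : ℕ) (h : Fin n → Fin n → ℝ) :
    ∑ i : Fin n, ∑ j ∈ Finset.univ.filter (fun j => i < j), h i j
      = ∑ i : Fin n, ∑ j ∈ Finset.univ.filter (fun j => j < i), h j i := by
  simp only [Finset.sum_filter]
  rw [Finset.sum_comm]

lemma double_sum_split (n : ℕ) (g : Fin n → Fin n → ℝ)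
    (hsym : ∀ i j, g i j = g j i) (hdiag : ∀ i, g i i = 0) :
    ∑ i : Fin n, ∑ j : Fin n, g i j
      = 2 * ∑ i : Fin n, ∑ j ∈ Finset.univ.filter (fun j => i < j), g i j := by
  have h1 : ∀ i ∈ (Finset.univ : Finset (Fin n)), ∑ j : Fin n, g i j
      = ∑ j ∈ Finset.univ.filter (fun j => i < j), g i j
        + ∑ j ∈ Finset.univ.filter (fun j => j < i), g i j := by
    intro i _
    rw [← Finset.sum_filter_add_sum_filter_not Finset.univ (fun j => i < j) (g i)]
    congr 1
    have hset : Finset.univ.filter (fun j => ¬ i < j)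
        = insert i (Finset.univ.filter (fun j => j < i)) := by
      ext x
      simp only [Finset.mem_filter, Finset.mem_univ, true_and, Finset.mem_insert, not_lt]
      omega
    rw [hset, Finset.sum_insert (by simp), hdiag, zero_add]
  rw [Finset.sum_congr rfl h1, Finset.sum_add_distrib]
  have h2 : ∑ i : Fin n, ∑ j ∈ Finset.univ.filter (fun j => j < i), g i j
      = ∑ i : Fin n, ∑ j ∈ Finset.univ.filter (fun j => i < j), g i j := by
    rw [swap_lt n (fun i j => g i j)]
    exact Finset.sum_congr rfl fun i _ => Finset.sum_congr rfl fun j _ => hsym _ _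
  rw [h2]
  ring

lemma pLT (n : ℕ) (a : Fin n → ℝ) :
    ∑ i : Fin n, ∑ j ∈ Finset.univ.filter (fun j => i < j), (a i - a j)^2
      = (n:ℝ) * (∑ i : Fin n, (a i)^2) - (∑ i : Fin n, a i)^2 := by
  have e : ∀ i ∈ (Finset.univ : Finset (Fin n)), ∑ j : Fin n, (a i - a j)^2
      = (n:ℝ)*(a i)^2 - 2*a i*(∑ j : Fin n, a j) + ∑ j : Fin n, (a j)^2 := by
    intro i _
    have h1 : ∀ j ∈ (Finset.univ : Finset (Fin n)), (a i - a j)^2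
        = (a i)^2 - 2*a i*a j + (a j)^2 := fun j _ => by ring
    have q : ∑ j : Fin n, 2*a i*a j = 2*a i*(∑ j : Fin n, a j) := by
      rw [Finset.mul_sum]
    rw [Finset.sum_congr rfl h1, Finset.sum_add_distrib, Finset.sum_sub_distrib,
        Finset.sum_const, Finset.card_univ, Fintype.card_fin, nsmul_eq_mul, q]
  have p1 : ∑ i : Fin n, (n:ℝ)*(a i)^2 = (n:ℝ)*(∑ i : Fin n, (a i)^2) := by
    rw [Finset.mul_sum]
  have p2 : ∑ i : Fin n, 2*a i*(∑ j : Fin n, a j)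
      = (∑ i : Fin n, a i) * (2*(∑ j : Fin n, a j)) := by
    rw [Finset.sum_mul]
    exact Finset.sum_congr rfl fun i _ => by ring
  have p3 : ∑ _i : Fin n, (∑ j : Fin n, (a j)^2) = (n:ℝ)*(∑ j : Fin n, (a j)^2) := by
    rw [Finset.sum_const, Finset.card_univ, Fintype.card_fin, nsmul_eq_mul]
  have hfull : ∑ i : Fin n, ∑ j : Fin n, (a i - a j)^2
      = 2*((n:ℝ) * (∑ i : Fin n, (a i)^2) - (∑ i : Fin n, a i)^2) := by
    rw [Finset.sum_congr rfl e, Finset.sum_add_distrib, Finset.sum_sub_distrib, p1, p2, p3]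
    ring
  have hsplit := double_sum_split n (fun i j => (a i - a j)^2)
    (fun i j => by ring) (fun i => by ring)
  rw [hfull] at hsplit
  linarith

lemma pFB (k : ℕ) (α : ℝ) (z : Fin (k+1) → ℝ) :
    (∏ l : Fin (k+1), (z l + α)) *
        (∑ i : Fin (k+1), ∑ j ∈ Finset.univ.erase i,
            ∏ l ∈ (Finset.univ.erase i).erase j, (z l + α))
      = (∑ i : Fin (k+1), ∏ l ∈ Finset.univ.erase i, (z l + α))^2
        - ∑ i : Fin (k+1), (∏ l ∈ Finset.univ.erase i, (z l + α))^2 := by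
  rw [Finset.mul_sum]
  have step : ∀ i ∈ (Finset.univ : Finset (Fin (k+1))),
      (∏ l : Fin (k+1), (z l+α)) * (∑ j ∈ Finset.univ.erase i,
          ∏ l ∈ (Finset.univ.erase i).erase j, (z l+α))
        = (∏ l ∈ Finset.univ.erase i, (z l+α)) *
            ((∑ i' : Fin (k+1), ∏ l ∈ Finset.univ.erase i', (z l+α))
              - ∏ l ∈ Finset.univ.erase i, (z l+α)) := by
    intro i _
    rw [Finset.mul_sum]
    have hab : ∀ j ∈ Finset.univ.erase i,
        (∏ l : Fin (k+1), (z l+α)) * ∏ l ∈ (Finset.univ.erase i).erase j, (z l+α)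
          = (∏ l ∈ Finset.univ.erase i, (z l+α)) *
              (∏ l ∈ Finset.univ.erase j, (z l+α)) := by
      intro j hj
      have hji : j ≠ i := Finset.ne_of_mem_erase hj
      have h1 : (∏ l ∈ Finset.univ.erase i, (z l+α))
          = (z j + α) * ∏ l ∈ (Finset.univ.erase i).erase j, (z l+α) :=
        (Finset.mul_prod_erase _ _ hj).symm
      have h2 : (∏ l : Fin (k+1), (z l+α))
          = (z i + α) * ∏ l ∈ Finset.univ.erase i, (z l+α) :=
        (Finset.mul_prod_erase _ _ (Finset.mem_univ i)).symm
      have hi' : i ∈ Finset.univ.erase j :=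
        Finset.mem_erase.mpr ⟨fun h => hji h.symm, Finset.mem_univ i⟩
      have h3 : (∏ l ∈ Finset.univ.erase j, (z l+α))
          = (z i + α) * ∏ l ∈ (Finset.univ.erase i).erase j, (z l+α) := by
        rw [show (Finset.univ.erase i).erase j = (Finset.univ.erase j).erase i from
          Finset.erase_right_comm]
        exact (Finset.mul_prod_erase _ _ hi').symm
      rw [h2, h1, h3]
      ring
    rw [Finset.sum_congr rfl hab, ← Finset.mul_sum,
        Finset.sum_erase_eq_sub (Finset.mem_univ i)]
  rw [Finset.sum_congr rfl step]
  have e2 : ∀ i ∈ (Finset.univ : Finset (Fin (k+1))),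
      (∏ l ∈ Finset.univ.erase i, (z l+α)) *
          ((∑ i' : Fin (k+1), ∏ l ∈ Finset.univ.erase i', (z l+α))
            - ∏ l ∈ Finset.univ.erase i, (z l+α))
        = (∏ l ∈ Finset.univ.erase i, (z l+α)) *
            (∑ i' : Fin (k+1), ∏ l ∈ Finset.univ.erase i', (z l+α))
          - (∏ l ∈ Finset.univ.erase i, (z l+α))^2 := fun i _ => by ring
  rw [Finset.sum_congr rfl e2, Finset.sum_sub_distrib, ← Finset.sum_mul]
  ring
lemma final_identity (k : ℕ) (α : ℝ) (z : Fin (k+1) → ℝ) :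
    (k:ℝ)*(SA k α z)^2 - ((k:ℝ)+1)*(SF k α z * SB k α z)
      = ∑ i : Fin (k+1), ∑ j ∈ Finset.univ.filter (fun j => i < j),
          (z i - z j)^2 * ∏ l ∈ Finset.univ \ {i, j}, (z l + α)^2 := by
  have hpair : ∀ i : Fin (k+1), ∀ j ∈ Finset.univ.filter (fun j => i < j),
      (z i - z j)^2 * ∏ l ∈ Finset.univ \ {i,j}, (z l + α)^2
        = ((∏ l ∈ Finset.univ.erase i, (z l + α))
            - (∏ l ∈ Finset.univ.erase j, (z l + α)))^2 := by
    intro i j hj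
    have hij : i ≠ j := ne_of_lt (Finset.mem_filter.mp hj).2
    have hset : (Finset.univ : Finset (Fin (k+1))) \ {i,j}
        = (Finset.univ.erase i).erase j := by
      rw [show ({i,j} : Finset (Fin (k+1))) = insert i {j} from rfl,
        Finset.sdiff_insert, Finset.sdiff_singleton_eq_erase, Finset.erase_right_comm]
    have hb : ∏ l ∈ Finset.univ \ {i,j}, (z l + α)^2
        = (∏ l ∈ (Finset.univ.erase i).erase j, (z l + α))^2 := by
      rw [hset, Finset.prod_pow]
    have hj' : j ∈ Finset.univ.erase i :=
      Finset.mem_erase.mpr ⟨hij.symm, Finset.mem_univ j⟩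
    have hi' : i ∈ Finset.univ.erase j :=
      Finset.mem_erase.mpr ⟨hij, Finset.mem_univ i⟩
    have h1 : (∏ l ∈ Finset.univ.erase i, (z l+α))
        = (z j + α) * ∏ l ∈ (Finset.univ.erase i).erase j, (z l+α) :=
      (Finset.mul_prod_erase _ _ hj').symm
    have h2 : (∏ l ∈ Finset.univ.erase j, (z l+α))
        = (z i + α) * ∏ l ∈ (Finset.univ.erase i).erase j, (z l+α) := by
      rw [show (Finset.univ.erase i).erase j = (Finset.univ.erase j).erase i from
        Finset.erase_right_comm]
      exact (Finset.mul_prod_erase _ _ hi').symm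
    rw [hb, h1, h2]
    ring
  have h1 : ∑ i : Fin (k+1), ∑ j ∈ Finset.univ.filter (fun j => i < j),
        (z i - z j)^2 * ∏ l ∈ Finset.univ \ {i, j}, (z l + α)^2
      = ∑ i : Fin (k+1), ∑ j ∈ Finset.univ.filter (fun j => i < j),
          ((∏ l ∈ Finset.univ.erase i, (z l + α))
            - (∏ l ∈ Finset.univ.erase j, (z l + α)))^2 :=
    Finset.sum_congr rfl fun i _ => Finset.sum_congr rfl (hpair i)
  have h2 := pLT (k+1) (fun i => ∏ l ∈ Finset.univ.erase i, (z l + α))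
  push_cast at h2
  have h3 := pFB k α z
  rw [h1, h2, ← LA k α z, ← LF k α z, ← LB k α z, h3]
  ring

theorem Ss_newton_top (k : ℕ) (hk : 2 ≤ k) (α : ℝ) (z : Fin (k + 1) → ℝ) :
    Ss (k + 1) α z (k - 1) k ^ 2 ≥
      Ss (k + 1) α z (k - 1) ((k : ℤ) - 1) * Ss (k + 1) α z (k - 1) ((k : ℤ) + 1) ∧
    (k : ℝ) * ((k : ℝ) + 1) ^ 2 *
        (Ss (k + 1) α z (k - 1) k ^ 2
          - Ss (k + 1) α z (k - 1) ((k : ℤ) - 1) * Ss (k + 1) α z (k - 1) ((k : ℤ) + 1)) =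
      ∑ i : Fin (k + 1), ∑ j ∈ Finset.univ.filter (fun j => i < j),
        (z i - z j) ^ 2 * ∏ l ∈ Finset.univ \ {i, j}, (z l + α) ^ 2 := by
  have hk0 : (0:ℝ) < k := by exact_mod_cast (by omega : 0 < k)
  have hK : (k:ℝ) * ((k:ℝ)+1) ≠ 0 := by positivity
  have c1 := comb1 k hk α z
  have c2 := comb2 k hk α z
  have c3 := comb3 k hk α z
  have hSm : Ss (k+1) α z (k-1) ((k:ℤ)-1) = SB k α z / ((k:ℝ)*((k:ℝ)+1)) := by
    rw [eq_div_iff hK]; linear_combination c1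
  have hSk : Ss (k+1) α z (k-1) (k:ℤ)
      = ((k:ℝ)*SA k α z - α*SB k α z) / ((k:ℝ)*((k:ℝ)+1)) := by
    rw [eq_div_iff hK]; linear_combination c2
  have hSp : Ss (k+1) α z (k-1) ((k:ℤ)+1)
      = (α^2*SB k α z - 2*(k:ℝ)*α*SA k α z + (k:ℝ)*((k:ℝ)+1)*SF k α z)
          / ((k:ℝ)*((k:ℝ)+1)) := by
    rw [eq_div_iff hK]; linear_combination c3
  have key : (k : ℝ) * ((k : ℝ) + 1) ^ 2 *
        (Ss (k + 1) α z (k - 1) k ^ 2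
          - Ss (k + 1) α z (k - 1) ((k : ℤ) - 1) * Ss (k + 1) α z (k - 1) ((k : ℤ) + 1))
      = (k:ℝ)*(SA k α z)^2 - ((k:ℝ)+1)*(SF k α z * SB k α z) := by
    rw [hSm, hSk, hSp]
    field_simp
    ring
  have main : (k : ℝ) * ((k : ℝ) + 1) ^ 2 *
        (Ss (k + 1) α z (k - 1) k ^ 2
          - Ss (k + 1) α z (k - 1) ((k : ℤ) - 1) * Ss (k + 1) α z (k - 1) ((k : ℤ) + 1))
      = ∑ i : Fin (k + 1), ∑ j ∈ Finset.univ.filter (fun j => i < j),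
          (z i - z j) ^ 2 * ∏ l ∈ Finset.univ \ {i, j}, (z l + α) ^ 2 := by
    rw [key, final_identity]
  refine ⟨?_, main⟩
  have hnn : (0:ℝ) ≤ ∑ i : Fin (k + 1), ∑ j ∈ Finset.univ.filter (fun j => i < j),
      (z i - z j) ^ 2 * ∏ l ∈ Finset.univ \ {i, j}, (z l + α) ^ 2 :=
    Finset.sum_nonneg fun i _ => Finset.sum_nonneg fun j _ =>
      mul_nonneg (sq_nonneg _) (Finset.prod_nonneg fun l _ => sq_nonneg _)
  rw [← main] at hnn
  have hpos : (0:ℝ) < (k:ℝ) * ((k:ℝ)+1)^2 := by positivity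
  nlinarith [hnn, hpos]
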